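/- arXiv:1805.12523 — 4 statements merged into one kernel-verified Lean document; each statement's English description precedes it below -/
import Mathlib

section
/- Let a, b, c be integers greater than 1 with gcd(a,b,c) = 1. Then there exist integers x, y, z such that gcd(a, bx + cy) = 1, gcd(b, ax + cz) = 1, and gcd(c, ay + bz) = 1. -/
lemma prime_dvd_prodPrimes {s : Finset ℕ} (hs : ∀ q ∈ s, Nat.Prime q) {p : ℕ}
    (hp : p.Prime) : p ∣ s.prod id ↔ p ∈ s := by
  constructor
  · intro hd
    obtain ⟨q, hq, hpq⟩ := (Prime.dvd_finset_prod_iff hp.prime id).mp hd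
    rwa [(Nat.prime_dvd_prime_iff_eq hp (hs q hq)).mp hpq]
  · exact fun h => Finset.dvd_prod_of_mem id h

lemma gcd_eq_one_of_no_prime (a m : ℤ)
    (H : ∀ p : ℕ, p.Prime → (p:ℤ) ∣ a → (p:ℤ) ∣ m → False) : Int.gcd a m = 1 := by
  by_contra hne
  obtain ⟨p, hp, hpd⟩ := Nat.exists_prime_and_dvd hne
  have h1 : (p:ℤ) ∣ a := dvd_trans (Int.natCast_dvd_natCast.mpr hpd) (Int.gcd_dvd_left a m)
  have h2 : (p:ℤ) ∣ m := dvd_trans (Int.natCast_dvd_natCast.mpr hpd) (Int.gcd_dvd_right a m)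
  exact H p hp h1 h2

theorem algebraic_lemma (a b c : ℤ) (ha : 1 < a) (hb : 1 < b) (hc : 1 < c)
    (h : Int.gcd (Int.gcd a b) c = 1) :
    ∃ x y z : ℤ, Int.gcd a (b * x + c * y) = 1 ∧ Int.gcd b (a * x + c * z) = 1 ∧
      Int.gcd c (a * y + b * z) = 1 := by
  have ha0 : a ≠ 0 := by omega
  have hb0 : b ≠ 0 := by omega
  have hc0 : c ≠ 0 := by omega
  set A := a.natAbs with hAdef
  set B := b.natAbs with hBdef
  set C := c.natAbs with hCdef
  have hA0 : A ≠ 0 := Int.natAbs_ne_zero.mpr ha0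
  have hB0 : B ≠ 0 := Int.natAbs_ne_zero.mpr hb0
  have hC0 : C ≠ 0 := Int.natAbs_ne_zero.mpr hc0
  have hN : Nat.gcd (Nat.gcd A B) C = 1 := by simpa [Int.gcd] using h
  have hpqr : ∀ p : ℕ, p.Prime → p ∣ A → p ∣ B → p ∣ C → False := by
    intro p hp h1 h2 h3
    have : p ∣ Nat.gcd (Nat.gcd A B) C := Nat.dvd_gcd (Nat.dvd_gcd h1 h2) h3
    rw [hN, Nat.dvd_one] at this
    exact hp.one_lt.ne' this
  -- the explicit solution
  set X : ℕ := (Nat.gcd A B).primeFactors.prod id with hXdef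
  set Y : ℕ := (A.primeFactors.filter (fun q => ¬ q ∣ B)).prod id with hYdef
  set Z : ℕ := ((B * C).primeFactors.filter (fun q => ¬ q ∣ A)).prod id with hZdef
  have hXiff : ∀ p : ℕ, p.Prime → (p ∣ X ↔ p ∣ Nat.gcd A B) := by
    intro p hp
    rw [prime_dvd_prodPrimes (fun q hq => Nat.prime_of_mem_primeFactors hq) hp,
      Nat.mem_primeFactors]
    exact ⟨fun h => h.2.1, fun h => ⟨hp, h, Nat.gcd_ne_zero_left hA0⟩⟩
  have hYiff : ∀ p : ℕ, p.Prime → (p ∣ Y ↔ (p ∣ A ∧ ¬ p ∣ B)) := by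
    intro p hp
    rw [prime_dvd_prodPrimes
      (fun q hq => Nat.prime_of_mem_primeFactors (Finset.mem_filter.mp hq).1) hp,
      Finset.mem_filter, Nat.mem_primeFactors]
    exact ⟨fun h => ⟨h.1.2.1, h.2⟩, fun h => ⟨⟨hp, h.1, hA0⟩, h.2⟩⟩
  have hZiff : ∀ p : ℕ, p.Prime → (p ∣ Z ↔ (p ∣ B * C ∧ ¬ p ∣ A)) := by
    intro p hp
    rw [prime_dvd_prodPrimes
      (fun q hq => Nat.prime_of_mem_primeFactors (Finset.mem_filter.mp hq).1) hp,
      Finset.mem_filter, Nat.mem_primeFactors]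
    exact ⟨fun h => ⟨h.1.2.1, h.2⟩, fun h => ⟨⟨hp, h.1, Nat.mul_ne_zero hB0 hC0⟩, h.2⟩⟩
  -- casts
  have castA : ∀ p : ℕ, ((p:ℤ) ∣ a ↔ p ∣ A) := fun p => Int.natCast_dvd
  have castB : ∀ p : ℕ, ((p:ℤ) ∣ b ↔ p ∣ B) := fun p => Int.natCast_dvd
  have castC : ∀ p : ℕ, ((p:ℤ) ∣ c ↔ p ∣ C) := fun p => Int.natCast_dvd
  refine ⟨(X:ℤ), (Y:ℤ), (Z:ℤ), ?_, ?_, ?_⟩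
  · apply gcd_eq_one_of_no_prime
    intro p hp hpa hpm
    have hpA : p ∣ A := (castA p).mp hpa
    have hpZ : Prime (p:ℤ) := Nat.prime_iff_prime_int.mp hp
    by_cases hpb : p ∣ B
    · -- p ∣ gcd a b, so p ∣ X, hence p ∣ c*Y, contradiction both ways
      have hpX : (p:ℤ) ∣ (X:ℤ) :=
        Int.natCast_dvd_natCast.mpr ((hXiff p hp).mpr (Nat.dvd_gcd hpA hpb))
      have : (p:ℤ) ∣ c * (Y:ℤ) := by
        have := dvd_sub hpm (Dvd.dvd.mul_left hpX b)
        simpa using this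
      rcases hpZ.dvd_mul.mp this with hc' | hy'
      · exact hpqr p hp hpA hpb ((castC p).mp hc')
      · exact ((hYiff p hp).mp (Int.natCast_dvd_natCast.mp hy')).2 hpb
    · -- p ∣ Y, hence p ∣ b*X, contradiction both ways
      have hpY : (p:ℤ) ∣ (Y:ℤ) :=
        Int.natCast_dvd_natCast.mpr ((hYiff p hp).mpr ⟨hpA, hpb⟩)
      have : (p:ℤ) ∣ b * (X:ℤ) := by
        have := dvd_sub hpm (Dvd.dvd.mul_left hpY c)
        simpa using this
      rcases hpZ.dvd_mul.mp this with hb' | hx'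
      · exact hpb ((castB p).mp hb')
      · exact hpb (((hXiff p hp).mp (Int.natCast_dvd_natCast.mp hx')).trans (Nat.gcd_dvd_right A B) |> id)
  · apply gcd_eq_one_of_no_prime
    intro p hp hpb hpm
    have hpB : p ∣ B := (castB p).mp hpb
    have hpZ : Prime (p:ℤ) := Nat.prime_iff_prime_int.mp hp
    by_cases hpa : p ∣ A
    · have hpX : (p:ℤ) ∣ (X:ℤ) :=
        Int.natCast_dvd_natCast.mpr ((hXiff p hp).mpr (Nat.dvd_gcd hpa hpB))
      have : (p:ℤ) ∣ c * (Z:ℤ) := by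
        have := dvd_sub hpm (Dvd.dvd.mul_left hpX a)
        simpa using this
      rcases hpZ.dvd_mul.mp this with hc' | hz'
      · exact hpqr p hp hpa hpB ((castC p).mp hc')
      · exact ((hZiff p hp).mp (Int.natCast_dvd_natCast.mp hz')).2 hpa
    · have hpZ' : (p:ℤ) ∣ (Z:ℤ) :=
        Int.natCast_dvd_natCast.mpr ((hZiff p hp).mpr ⟨Dvd.dvd.mul_right hpB C, hpa⟩)
      have : (p:ℤ) ∣ a * (X:ℤ) := by
        have := dvd_sub hpm (Dvd.dvd.mul_left hpZ' c)
        simpa using this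
      rcases hpZ.dvd_mul.mp this with ha' | hx'
      · exact hpa ((castA p).mp ha')
      · exact hpa (((hXiff p hp).mp (Int.natCast_dvd_natCast.mp hx')).trans (Nat.gcd_dvd_left A B))
  · apply gcd_eq_one_of_no_prime
    intro p hp hpc hpm
    have hpC : p ∣ C := (castC p).mp hpc
    have hpZ : Prime (p:ℤ) := Nat.prime_iff_prime_int.mp hp
    by_cases hpa : p ∣ A
    · -- p ∣ a, so p ∣ b*Z; p ∤ b (else triple), p ∤ Z since p ∣ A
      have : (p:ℤ) ∣ b * (Z:ℤ) := by
        have := dvd_sub hpm (Dvd.dvd.mul_right ((castA p).mpr hpa) (Y:ℤ))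
        simpa using this
      rcases hpZ.dvd_mul.mp this with hb' | hz'
      · exact hpqr p hp hpa ((castB p).mp hb') hpC
      · exact ((hZiff p hp).mp (Int.natCast_dvd_natCast.mp hz')).2 hpa
    · have hpZ' : (p:ℤ) ∣ (Z:ℤ) :=
        Int.natCast_dvd_natCast.mpr ((hZiff p hp).mpr ⟨Dvd.dvd.mul_left hpC B, hpa⟩)
      have : (p:ℤ) ∣ a * (Y:ℤ) := by
        have := dvd_sub hpm (Dvd.dvd.mul_left hpZ' b)
        simpa using this
      rcases hpZ.dvd_mul.mp this with ha' | hy'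
      · exact hpa ((castA p).mp ha')
      · exact hpa ((hYiff p hp).mp (Int.natCast_dvd_natCast.mp hy')).1
end

section
/- Let a, b, c be integers greater than 1 with gcd(a,b,c) = 1 and c odd. Write a = α·c₁ where gcd(α,c) = 1 and every prime factor of c₁ divides c; write b = β·c₂ where gcd(β,c) = 1 and every prime factor of c₂ divides c; write c = γ·c₃ where gcd(γ,a) = gcd(γ,b) = 1 and every prime factor of c₃ divides a or b. Then gcd(a, bαβ − cbαβ + cγ) = 1. -/
theorem claim1 (a b c α β γ c₁ c₂ c₃ : ℤ)
    (ha : 1 < a) (hb : 1 < b) (hc : 1 < c)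
    (hgcd : Int.gcd (Int.gcd a b) c = 1) (hodd : Odd c)
    (hafac : a = α * c₁) (hαc : Int.gcd α c = 1)
    (hc₁ : ∀ p : ℤ, Prime p → p ∣ c₁ → p ∣ c)
    (hbfac : b = β * c₂) (hβc : Int.gcd β c = 1)
    (hc₂ : ∀ p : ℤ, Prime p → p ∣ c₂ → p ∣ c)
    (hcfac : c = γ * c₃) (hγa : Int.gcd γ a = 1) (hγb : Int.gcd γ b = 1)
    (hc₃ : ∀ p : ℤ, Prime p → p ∣ c₃ → p ∣ a ∨ p ∣ b) :
    Int.gcd a (b * α * β - c * b * α * β + c * γ) = 1 := by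
  set N := b * α * β - c * b * α * β + c * γ with hN
  by_contra h
  obtain ⟨p, hp, hpd⟩ := Nat.exists_prime_and_dvd h
  have hpz : Prime (p : ℤ) := Nat.prime_iff_prime_int.mp hp
  have hpa : (p : ℤ) ∣ a := dvd_trans (Int.natCast_dvd_natCast.mpr hpd) (Int.gcd_dvd_left _ _)
  have hpN : (p : ℤ) ∣ N := dvd_trans (Int.natCast_dvd_natCast.mpr hpd) (Int.gcd_dvd_right _ _)
  by_cases hpc : (p : ℤ) ∣ c
  · -- p ∣ c case
    have hpbab : (p : ℤ) ∣ b * α * β := by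
      have : b * α * β = N - c * (γ - b * α * β) := by ring
      rw [this]
      exact dvd_sub hpN (Dvd.dvd.mul_right hpc _)
    rcases hpz.dvd_mul.mp hpbab with hbα | hpβ
    · rcases hpz.dvd_mul.mp hbα with hpb | hpα
      · have : (p : ℤ) ∣ (Int.gcd (Int.gcd a b) c : ℤ) :=
          Int.dvd_coe_gcd (Int.dvd_coe_gcd hpa hpb) hpc
        rw [hgcd] at this
        exact hpz.not_dvd_one this
      · have : (p : ℤ) ∣ (Int.gcd α c : ℤ) := Int.dvd_coe_gcd hpα hpc
        rw [hαc] at this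
        exact hpz.not_dvd_one this
    · have : (p : ℤ) ∣ (Int.gcd β c : ℤ) := Int.dvd_coe_gcd hpβ hpc
      rw [hβc] at this
      exact hpz.not_dvd_one this
  · -- p ∤ c case
    have hpα : (p : ℤ) ∣ α := by
      rw [hafac] at hpa
      rcases hpz.dvd_mul.mp hpa with h1 | h1
      · exact h1
      · exact absurd (hc₁ _ hpz h1) hpc
    have hpcγ : (p : ℤ) ∣ c * γ := by
      have h1 : (p : ℤ) ∣ b * α * β := Dvd.dvd.mul_right (hpα.mul_left b) β
      have h2 : (p : ℤ) ∣ c * b * α * β := Dvd.dvd.mul_right (hpα.mul_left (c * b)) β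
      have heq : c * γ = N - b * α * β + c * b * α * β := by ring
      rw [heq]
      exact dvd_add (dvd_sub hpN h1) h2
    have hpγ : (p : ℤ) ∣ γ := (hpz.dvd_mul.mp hpcγ).resolve_left hpc
    have : (p : ℤ) ∣ (Int.gcd γ a : ℤ) := Int.dvd_coe_gcd hpγ hpa
    rw [hγa] at this
    exact hpz.not_dvd_one this
end

section
/- Let p₁, p₂, p₃ be integers greater than 1 with gcd(p₁,p₂,p₃) = 1. Then there exist integers q₁, q₂, q₃ and a₁₂, a₁₃, a₂₃ such that gcd(p₁,q₁) = gcd(p₂,q₂) = gcd(p₃,q₃) = 1 and q₁ + a₁₂p₂ + a₁₃p₃ = 0, q₂ + a₁₂p₁ + a₂₃p₃ = 0, q₃ + a₁₃p₁ + a₂₃p₂ = 0. -/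
lemma natCast_dvd_int {m : ℕ} {z : ℤ} : (m : ℤ) ∣ z ↔ m ∣ z.natAbs := by
  rw [← Int.dvd_natAbs, Int.natCast_dvd_natCast]

lemma prime_int_of_nat {p : ℕ} (hp : p.Prime) : Prime (p : ℤ) := by
  rw [Int.prime_iff_natAbs_prime]
  simpa using hp

/-- Helper: an arithmetic progression `a + k*b` contains an element coprime to `n`,
provided `gcd(a, b, n) = 1`. Explicit witness: `k = n / gcd(n, a^n)` (in absolute values). -/
lemma exists_coprime_add_mul (n a b : ℤ) (hn : n ≠ 0)
    (h : Int.gcd (Int.gcd a b : ℤ) n = 1) : ∃ k : ℤ, Int.gcd n (a + k * b) = 1 := by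
  set N := n.natAbs with hNdef
  have hN : N ≠ 0 := Int.natAbs_ne_zero.mpr hn
  set A := a.natAbs with hAdef
  set g := Nat.gcd N (A ^ N) with hgdef
  have hgN : g ∣ N := Nat.gcd_dvd_left _ _
  refine ⟨(N / g : ℕ), ?_⟩
  by_contra hne
  obtain ⟨p, hp, hpd⟩ := Nat.exists_prime_and_dvd hne
  have hpP : Prime (p : ℤ) := prime_int_of_nat hp
  have hpN : p ∣ N := hpd.trans (Nat.gcd_dvd_left _ _)
  have hpsum : (p : ℤ) ∣ a + (N / g : ℕ) * b :=
    natCast_dvd_int.mpr (hpd.trans (Nat.gcd_dvd_right _ _))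
  by_cases hpa : (p : ℤ) ∣ a
  · -- then p ∤ b and p ∤ k, contradiction with p ∣ k*b
    have hpb : ¬ (p : ℤ) ∣ b := by
      intro hb
      have h1 : p ∣ Int.gcd a b :=
        Nat.dvd_gcd (natCast_dvd_int.mp hpa) (natCast_dvd_int.mp hb)
      have h2 : p ∣ Int.gcd (Int.gcd a b : ℤ) n :=
        Nat.dvd_gcd (by simpa using h1) hpN
      rw [h] at h2
      exact hp.ne_one (Nat.dvd_one.mp h2)
    have hpA : p ∣ A := natCast_dvd_int.mp hpa
    have he : N.factorization p < N := Nat.factorization_lt p hN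
    have h1 : p ^ N.factorization p ∣ A ^ N :=
      dvd_trans (pow_dvd_pow p he.le) (pow_dvd_pow_of_dvd hpA N)
    have h2 : p ^ N.factorization p ∣ g := Nat.dvd_gcd (Nat.ordProj_dvd N p) h1
    have hpk : ¬ p ∣ N / g := by
      intro hk
      have hdvd : p ^ (N.factorization p + 1) ∣ N := by
        have : p * p ^ N.factorization p ∣ (N / g) * g := mul_dvd_mul hk h2
        rwa [Nat.div_mul_cancel hgN, ← pow_succ'] at this
      exact Nat.pow_succ_factorization_not_dvd hN hp hdvd
    have hkb : (p : ℤ) ∣ (N / g : ℕ) * b := by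
      have := dvd_sub hpsum hpa
      simpa using this
    rcases hpP.dvd_mul.mp hkb with hk | hb
    · exact hpk (Int.natCast_dvd_natCast.mp hk)
    · exact hpb hb
  · -- then p ∤ g hence p ∣ N/g, so p ∣ a, contradiction
    have hpg : ¬ p ∣ g := by
      intro hg
      have hA : p ∣ A ^ N := hg.trans (Nat.gcd_dvd_right _ _)
      exact hpa (natCast_dvd_int.mpr (hp.dvd_of_dvd_pow hA))
    have hpk : p ∣ N / g := by
      have h1 : p ∣ (N / g) * g := by rwa [Nat.div_mul_cancel hgN]
      rcases (Nat.Prime.dvd_mul hp).mp h1 with hh | hh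
      · exact hh
      · exact absurd hh hpg
    have hfin : (p : ℤ) ∣ a := by
      have hkb : (p : ℤ) ∣ (N / g : ℕ) * b :=
        Dvd.dvd.mul_right (Int.natCast_dvd_natCast.mpr hpk) b
      have := dvd_sub hpsum hkb
      simpa using this
    exact hpa hfin

theorem exists_cable_slopes (p₁ p₂ p₃ : ℤ) (hp₁ : 1 < p₁) (hp₂ : 1 < p₂) (hp₃ : 1 < p₃)
    (hgcd : Int.gcd (Int.gcd p₁ p₂) p₃ = 1) :
    ∃ q₁ q₂ q₃ a₁₂ a₁₃ a₂₃ : ℤ,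
      Int.gcd p₁ q₁ = 1 ∧ Int.gcd p₂ q₂ = 1 ∧ Int.gcd p₃ q₃ = 1 ∧
      q₁ + a₁₂ * p₂ + a₁₃ * p₃ = 0 ∧ q₂ + a₁₂ * p₁ + a₂₃ * p₃ = 0 ∧
      q₃ + a₁₃ * p₁ + a₂₃ * p₂ = 0 := by
  have hp₁0 : p₁ ≠ 0 := by omega
  have hp₂0 : p₂ ≠ 0 := by omega
  have hp₃0 : p₃ ≠ 0 := by omega
  -- no prime divides all three
  have htri : ∀ p : ℕ, p.Prime → (p:ℤ) ∣ p₁ → (p:ℤ) ∣ p₂ → (p:ℤ) ∣ p₃ → False := by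
    intro p hp h1 h2 h3
    have hd : p ∣ Int.gcd (Int.gcd p₁ p₂ : ℤ) p₃ := by
      refine Nat.dvd_gcd ?_ (natCast_dvd_int.mp h3)
      have h12 : p ∣ Int.gcd p₁ p₂ :=
        Nat.dvd_gcd (natCast_dvd_int.mp h1) (natCast_dvd_int.mp h2)
      simpa using h12
    rw [hgcd] at hd
    exact hp.ne_one (Nat.dvd_one.mp hd)
  -- Bezout for gcd(p₂, p₃)
  set x₀ := Int.gcdA p₂ p₃ with hx₀
  set y₀ := Int.gcdB p₂ p₃ with hy₀
  have hbez : (Int.gcd p₂ p₃ : ℤ) = p₂ * x₀ + p₃ * y₀ := Int.gcd_eq_gcd_ab p₂ p₃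
  -- gcd(p₁, gcd(p₂,p₃)) = 1
  have hgcd1 : Int.gcd p₁ (Int.gcd p₂ p₃ : ℤ) = 1 := by
    have hassoc : Nat.gcd (Nat.gcd p₁.natAbs p₂.natAbs) p₃.natAbs = 1 := by
      simpa [Int.gcd] using hgcd
    rw [Nat.gcd_assoc] at hassoc
    simpa [Int.gcd] using hassoc
  -- choose s making q₂ work
  have hgab2 : Int.gcd (Int.gcd (x₀ * p₁ + p₃) (p₁ * p₁) : ℤ) p₂ = 1 := by
    by_contra hne
    obtain ⟨p, hp, hpd⟩ := Nat.exists_prime_and_dvd hne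
    have hpP : Prime (p : ℤ) := prime_int_of_nat hp
    have hAB : p ∣ Int.gcd (x₀ * p₁ + p₃) (p₁ * p₁) := by
      have := hpd.trans (Nat.gcd_dvd_left _ _)
      simpa using this
    have hA : (p:ℤ) ∣ x₀ * p₁ + p₃ :=
      natCast_dvd_int.mpr (hAB.trans (Nat.gcd_dvd_left _ _))
    have hB : (p:ℤ) ∣ p₁ * p₁ :=
      natCast_dvd_int.mpr (hAB.trans (Nat.gcd_dvd_right _ _))
    have h2 : (p:ℤ) ∣ p₂ := natCast_dvd_int.mpr (hpd.trans (Nat.gcd_dvd_right _ _))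
    have h1 : (p:ℤ) ∣ p₁ := (hpP.dvd_mul.mp hB).elim id id
    have h3 : (p:ℤ) ∣ p₃ := by
      have := dvd_sub hA (h1.mul_left x₀)
      simpa using this
    exact htri p hp h1 h2 h3
  obtain ⟨s, hs⟩ := exists_coprime_add_mul p₂ (x₀ * p₁ + p₃) (p₁ * p₁) hp₂0 hgab2
  -- choose t making q₃ work
  have hgab3 : Int.gcd (Int.gcd (y₀ * p₁ + p₂) (p₁ * p₁) : ℤ) p₃ = 1 := by
    by_contra hne
    obtain ⟨p, hp, hpd⟩ := Nat.exists_prime_and_dvd hne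
    have hpP : Prime (p : ℤ) := prime_int_of_nat hp
    have hAB : p ∣ Int.gcd (y₀ * p₁ + p₂) (p₁ * p₁) := by
      have := hpd.trans (Nat.gcd_dvd_left _ _)
      simpa using this
    have hA : (p:ℤ) ∣ y₀ * p₁ + p₂ :=
      natCast_dvd_int.mpr (hAB.trans (Nat.gcd_dvd_left _ _))
    have hB : (p:ℤ) ∣ p₁ * p₁ :=
      natCast_dvd_int.mpr (hAB.trans (Nat.gcd_dvd_right _ _))
    have h3 : (p:ℤ) ∣ p₃ := natCast_dvd_int.mpr (hpd.trans (Nat.gcd_dvd_right _ _))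
    have h1 : (p:ℤ) ∣ p₁ := (hpP.dvd_mul.mp hB).elim id id
    have h2 : (p:ℤ) ∣ p₂ := by
      have := dvd_sub hA (h1.mul_left y₀)
      simpa using this
    exact htri p hp h1 h2 h3
  obtain ⟨t, ht⟩ := exists_coprime_add_mul p₃ (y₀ * p₁ + p₂) (p₁ * p₁) hp₃0 hgab3
  -- assemble
  refine ⟨-((x₀ + s * p₁) * p₂ + (y₀ + t * p₁) * p₃),
          -((x₀ + s * p₁) * p₁ + 1 * p₃),
          -((y₀ + t * p₁) * p₁ + 1 * p₂),
          x₀ + s * p₁, y₀ + t * p₁, 1, ?_, ?_, ?_, by ring, by ring, by ring⟩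
  · -- gcd(p₁, q₁) = 1
    rw [← Int.isCoprime_iff_gcd_eq_one] at hgcd1 ⊢
    have heq : -((x₀ + s * p₁) * p₂ + (y₀ + t * p₁) * p₃)
        = -(Int.gcd p₂ p₃ : ℤ) + p₁ * (-(s * p₂ + t * p₃)) := by
      rw [hbez]; ring
    rw [heq]
    exact (hgcd1.neg_right).add_mul_left_right _
  · -- gcd(p₂, q₂) = 1
    rw [← Int.isCoprime_iff_gcd_eq_one] at hs ⊢
    have heq : -((x₀ + s * p₁) * p₁ + 1 * p₃) = -((x₀ * p₁ + p₃) + s * (p₁ * p₁)) := by ring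
    rw [heq]
    exact hs.neg_right
  · -- gcd(p₃, q₃) = 1
    rw [← Int.isCoprime_iff_gcd_eq_one] at ht ⊢
    have heq : -((y₀ + t * p₁) * p₁ + 1 * p₂) = -((y₀ * p₁ + p₂) + t * (p₁ * p₁)) := by ring
    rw [heq]
    exact ht.neg_right
end

section
/- Let a, b, c be integers greater than 1 with gcd(a,b,c) = 1 and c odd, and factor a = αc₁, b = βc₂, c = γc₃ as follows: gcd(α,c) = 1 and every prime of c₁ divides c; gcd(β,c) = 1 and every prime of c₂ divides c; gcd(γ,a) = gcd(γ,b) = 1 and every prime of c₃ divides a or b. Then gcd(b, aαβ − caαβ + cγ) = 1. -/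
theorem claim2 (a b c α β γ c₁ c₂ c₃ : ℤ)
    (ha : 1 < a) (hb : 1 < b) (hc : 1 < c)
    (hgcd : Int.gcd (Int.gcd a b) c = 1) (hodd : Odd c)
    (hafac : a = α * c₁) (hαc : Int.gcd α c = 1)
    (hc₁ : ∀ p : ℤ, Prime p → p ∣ c₁ → p ∣ c)
    (hbfac : b = β * c₂) (hβc : Int.gcd β c = 1)
    (hc₂ : ∀ p : ℤ, Prime p → p ∣ c₂ → p ∣ c)
    (hcfac : c = γ * c₃) (hγa : Int.gcd γ a = 1) (hγb : Int.gcd γ b = 1)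
    (hc₃ : ∀ p : ℤ, Prime p → p ∣ c₃ → p ∣ a ∨ p ∣ b) :
    Int.gcd b (a * α * β - c * a * α * β + c * γ) = 1 := by
  by_contra hne
  obtain ⟨p, hp, hpg⟩ := Nat.exists_prime_and_dvd hne
  have hpZ : Prime (p : ℤ) := Nat.prime_iff_prime_int.mp hp
  have hp1 : 1 < p := hp.one_lt
  have hpg' : ((p : ℤ)) ∣ ↑(Int.gcd b (a * α * β - c * a * α * β + c * γ)) :=
    Int.natCast_dvd_natCast.mpr hpg
  have hpb : (p : ℤ) ∣ b := hpg'.trans (Int.gcd_dvd_left _ _)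
  have hpN : (p : ℤ) ∣ a * α * β - c * a * α * β + c * γ := hpg'.trans (Int.gcd_dvd_right _ _)
  have hpβc₂ : (p : ℤ) ∣ β * c₂ := by rwa [hbfac] at hpb
  rcases hpZ.dvd_mul.mp hpβc₂ with hpβ | hpc₂
  · -- p ∣ β : then p ∣ c*γ
    have h1 : (p : ℤ) ∣ a * α * β - c * a * α * β :=
      dvd_sub (Dvd.dvd.mul_left hpβ _) (Dvd.dvd.mul_left hpβ _)
    have hpcγ : (p : ℤ) ∣ c * γ := by
      have h := dvd_sub hpN h1
      have e : a * α * β - c * a * α * β + c * γ - (a * α * β - c * a * α * β) = c * γ := by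
        ring
      rwa [e] at h
    rcases hpZ.dvd_mul.mp hpcγ with hpc | hpγ
    · have h2 := Int.dvd_coe_gcd hpβ hpc
      rw [hβc] at h2
      have := Int.le_of_dvd one_pos h2
      omega
    · have h2 := Int.dvd_coe_gcd hpγ hpb
      rw [hγb] at h2
      have := Int.le_of_dvd one_pos h2
      omega
  · -- p ∣ c₂ : then p ∣ c
    have hpc : (p : ℤ) ∣ c := hc₂ _ hpZ hpc₂
    have h1 : (p : ℤ) ∣ c * (γ - a * α * β) := Dvd.dvd.mul_right hpc _
    have hpaαβ : (p : ℤ) ∣ a * α * β := by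
      have h := dvd_sub hpN h1
      have e : a * α * β - c * a * α * β + c * γ - c * (γ - a * α * β) = a * α * β := by
        ring
      rwa [e] at h
    have hpa : (p : ℤ) ∣ a := by
      rcases hpZ.dvd_mul.mp hpaαβ with h | hpβ
      · rcases hpZ.dvd_mul.mp h with hpa | hpα
        · exact hpa
        · exact hafac ▸ Dvd.dvd.mul_right hpα _
      · exfalso
        have h2 := Int.dvd_coe_gcd hpβ hpc
        rw [hβc] at h2
        have := Int.le_of_dvd one_pos h2
        omega
    have h2 := Int.dvd_coe_gcd (Int.dvd_coe_gcd hpa hpb) hpc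
    rw [hgcd] at h2
    have := Int.le_of_dvd one_pos h2
    omega
end
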